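/- For any t > 0 and ν ≥ 1/2, the two symplectic eigenvalues ν±(ν,t) = (1/2)·√(4νt ± 2t·√(4νt + t² + 1) + 2t² + 1) both satisfy ν±(ν,t) = √(νt) + O(1) as ν → ∞; precisely, |ν±(ν,t) - √(νt)| is bounded uniformly in ν ≥ 1/2 for each fixed t. -/
import Mathlib


open Real

lemma sqrt_diff_bound {x y : ℝ} (hx : 0 ≤ x) (hy : 0 < y) :
    |Real.sqrt x - Real.sqrt y| ≤ |x - y| / Real.sqrt y := by
  have hsy : 0 < Real.sqrt y := Real.sqrt_pos.2 hy
  rw [le_div_iff₀ hsy]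
  have h1 : |Real.sqrt x - Real.sqrt y| * Real.sqrt y ≤
      |Real.sqrt x - Real.sqrt y| * (Real.sqrt x + Real.sqrt y) := by
    apply mul_le_mul_of_nonneg_left _ (abs_nonneg _)
    nlinarith [Real.sqrt_nonneg x]
  have h2 : |Real.sqrt x - Real.sqrt y| * (Real.sqrt x + Real.sqrt y) = |x - y| := by
    have hxy : 0 ≤ Real.sqrt x + Real.sqrt y := by positivity
    rw [← abs_of_nonneg hxy, ← abs_mul]
    congr 1
    have := Real.sq_sqrt hx
    have := Real.sq_sqrt hy.le
    ring_nf
    nlinarith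
  linarith [h1, h2.le, h2.ge]

/-- For fixed `t > 0`, the two symplectic eigenvalues
`ν±(ν,t) = (1/2)·√(4νt ± 2t·√(4νt + t² + 1) + 2t² + 1)` satisfy
`ν±(ν,t) = √(νt) + O(1)`: the differences `|ν±(ν,t) - √(νt)|` are bounded
uniformly in `ν ≥ 1/2`. -/
theorem symplectic_eigenvalues_asymp (t : ℝ) (ht : 0 < t) :
    ∃ C : ℝ, ∀ ν : ℝ, 1/2 ≤ ν →
      |(1/2) * Real.sqrt (4*ν*t + 2*t*Real.sqrt (4*ν*t + t^2 + 1) + 2*t^2 + 1)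
          - Real.sqrt (ν*t)| ≤ C ∧
      |(1/2) * Real.sqrt (4*ν*t - 2*t*Real.sqrt (4*ν*t + t^2 + 1) + 2*t^2 + 1)
          - Real.sqrt (ν*t)| ≤ C := by
  set D : ℝ := (2*t*Real.sqrt (t^2+1) + 2*t^2 + 1)/4 with hD
  have hD0 : 0 ≤ D := by
    have := Real.sqrt_nonneg (t^2+1)
    positivity
  clear_value D
  refine ⟨t + D / Real.sqrt (t/2), ?_⟩
  intro ν hν
  have ha0 : 0 < ν * t := by nlinarith
  set a : ℝ := ν * t with haa
  have hat : t/2 ≤ a := by nlinarith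
  set s : ℝ := Real.sqrt (4*ν*t + t^2 + 1) with hs
  have hs0 : 0 ≤ s := Real.sqrt_nonneg _
  have hs2 : s^2 = 4*ν*t + t^2 + 1 := Real.sq_sqrt (by nlinarith)
  clear_value a s
  have hsa : 0 < Real.sqrt a := Real.sqrt_pos.2 ha0
  have hsa2 : (Real.sqrt a)^2 = a := Real.sq_sqrt ha0.le
  have hsat : Real.sqrt (t/2) ≤ Real.sqrt a := Real.sqrt_le_sqrt hat
  have hst2 : 0 < Real.sqrt (t/2) := Real.sqrt_pos.2 (by linarith)
  -- s ≤ 2√a + √(t²+1)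
  have hsle : s ≤ 2 * Real.sqrt a + Real.sqrt (t^2+1) := by
    have h1 : (Real.sqrt (t^2+1))^2 = t^2+1 := Real.sq_sqrt (by positivity)
    nlinarith [Real.sqrt_nonneg (t^2+1), mul_nonneg hsa.le (Real.sqrt_nonneg (t^2+1))]
  have h4a : Real.sqrt (4*a) = 2 * Real.sqrt a := by
    rw [show (4:ℝ)*a = 2^2 * a by ring, Real.sqrt_mul (by positivity),
      Real.sqrt_sq (by norm_num)]
  have key : ∀ x : ℝ, 0 ≤ x → |x - 4*a| ≤ 4*t*Real.sqrt a + 4*D →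
      |(1/2) * Real.sqrt x - Real.sqrt a| ≤ t + D / Real.sqrt (t/2) := by
    intro x hx hxd
    have h1 : |(1/2) * Real.sqrt x - Real.sqrt a| =
        (1/2) * |Real.sqrt x - 2 * Real.sqrt a| := by
      rw [show (1/2) * Real.sqrt x - Real.sqrt a
            = (1/2) * (Real.sqrt x - 2 * Real.sqrt a) by ring, abs_mul]
      norm_num
    rw [h1]
    have h2 := sqrt_diff_bound hx (show (0:ℝ) < 4*a by linarith)
    rw [h4a] at h2
    have h3 : |x - 4*a| / (2 * Real.sqrt a) ≤ (4*t*Real.sqrt a + 4*D) / (2 * Real.sqrt a) := by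
      apply div_le_div_of_nonneg_right hxd -- may need correct name
      positivity
    have h4 : (4*t*Real.sqrt a + 4*D) / (2 * Real.sqrt a) = 2*t + 2*D / Real.sqrt a := by
      field_simp; ring
    have h5 : D / Real.sqrt a ≤ D / Real.sqrt (t/2) :=
      div_le_div_of_nonneg_left hD0 hst2 hsat
    calc (1/2) * |Real.sqrt x - 2 * Real.sqrt a| ≤ (1/2) * (|x - 4*a| / (2 * Real.sqrt a)) := by
            linarith
      _ ≤ (1/2) * ((4*t*Real.sqrt a + 4*D) / (2 * Real.sqrt a)) := by linarith
      _ = t + D / Real.sqrt a := by rw [h4]; ring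
      _ ≤ t + D / Real.sqrt (t/2) := by linarith
  have habs : ∀ x : ℝ, x = 4*a + 2*t*s - 4*a ∨ True → True := fun _ _ => trivial
  have hdiff : 2*t*s + 2*t^2 + 1 ≤ 4*t*Real.sqrt a + 4*D := by
    have : 2*t*s ≤ 2*t*(2 * Real.sqrt a + Real.sqrt (t^2+1)) :=
      mul_le_mul_of_nonneg_left hsle (by positivity)
    rw [hD]; nlinarith
  have hnn : 0 ≤ 4*ν*t - 2*t*s + 2*t^2 + 1 := by
    nlinarith [sq_nonneg (t - s)]
  have hts : 0 ≤ t * s := mul_nonneg ht.le hs0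
  constructor
  · apply key _ (by nlinarith)
    rw [abs_of_nonneg (by linarith [sq_nonneg t])]
    linarith
  · apply key _ hnn
    rw [abs_le]
    constructor
    · linarith [sq_nonneg t]
    · linarith [sq_nonneg t]
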